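/- arXiv:2401.06501 — 2 statements merged into one kernel-verified Lean document; each statement's English description precedes it below -/
import Mathlib

section
/- Take k₁ = 1 and, for a nonnegative integer τ, set g(τ) = 𝓕₂⁽¹⁾(a, b₁, b₂; c₁, c₂; τ, t₂, 1, k₂, x, y). Then for every r ∈ ℕ the r-th forward difference of g in the discrete variable satisfies Σ_{j=0}^{r} (−1)^{r−j} binom(r,j) g(t₁ + j) = ((a)_r (b₁)_r x^r / (c₁)_r) · 𝓕₂⁽¹⁾(a + r, b₁ + r, b₂; c₁ + r, c₂; t₁, t₂, 1, k₂, x, y). -/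
open Complex Finset

/-- Ascending Pochhammer symbol `(z)_j = z (z+1) ⋯ (z+j−1)`, with `(z)_0 = 1`. -/
noncomputable def poch (z : ℂ) (j : ℕ) : ℂ := (ascPochhammer ℂ j).eval z

/-- The first discrete Appell function `𝓕₂⁽¹⁾(a,b₁,b₂;c₁,c₂;t₁,t₂,k₁,k₂,x,y)`.
Since `(−t₁)_{m k₁} = 0` once `m k₁ > t₁` and `(−t₂)_{n k₂} = 0` once `n k₂ > t₂`
(for `k₁, k₂ ≥ 1`), the doubly infinite sum reduces to this finite sum. -/
noncomputable def F2one (a b₁ b₂ c₁ c₂ : ℂ) (t₁ t₂ k₁ k₂ : ℕ) (x y : ℂ) : ℂ :=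
  ∑ m ∈ Finset.range (t₁ + 1), ∑ n ∈ Finset.range (t₂ + 1),
    poch a (m + n) * poch b₁ m * poch b₂ n * (-1 : ℂ) ^ (m * k₁) * poch (-(t₁ : ℂ)) (m * k₁)
      * (-1 : ℂ) ^ (n * k₂) * poch (-(t₂ : ℂ)) (n * k₂) * x ^ m * y ^ n
    / (poch c₁ m * poch c₂ n * (Nat.factorial m : ℂ) * (Nat.factorial n : ℂ))

lemma poch_zero (z : ℂ) : poch z 0 = 1 := by simp [poch]

lemma poch_succ (z : ℂ) (k : ℕ) : poch z (k+1) = poch z k * (z + k) := by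
  simp [poch, ascPochhammer_succ_right, Polynomial.eval_mul]

lemma poch_add (z : ℂ) (m n : ℕ) : poch z (m+n) = poch z m * poch (z + m) n := by
  have := ascPochhammer_mul (S := ℂ) m n
  have h := congrArg (Polynomial.eval z) this
  simpa [poch, Polynomial.eval_comp] using h.symm

lemma poch_ne_zero {c : ℂ} (hc : ∀ n : ℕ, c ≠ -(n : ℂ)) (k : ℕ) : poch c k ≠ 0 := by
  induction k with
  | zero => simp [poch_zero]
  | succ k ih =>
    rw [poch_succ]
    refine mul_ne_zero ih ?_
    intro h
    exact hc k (by linear_combination h)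

lemma descFac_eq (n k : ℕ) : ((n.descFactorial k : ℕ) : ℂ) = (-1)^k * poch (-(n:ℂ)) k := by
  induction k with
  | zero => simp [poch_zero]
  | succ k ih =>
    rw [poch_succ, pow_succ]
    have : (-1:ℂ)^k * (-1) * (poch (-(n:ℂ)) k * (-(n:ℂ) + k)) =
        ((-1:ℂ)^k * poch (-(n:ℂ)) k) * ((n:ℂ) - k) := by ring
    rw [this, ← ih]
    by_cases h : k ≤ n
    · rw [Nat.descFactorial_succ]
      push_cast [h]
      ring
    · push_neg at h
      rw [Nat.descFactorial_eq_zero_iff_lt.mpr (by omega),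
        Nat.descFactorial_eq_zero_iff_lt.mpr h]
      simp

lemma delta_step (f : ℕ → ℂ) (r t : ℕ) :
    ∑ j ∈ Finset.range (r+2), (-1:ℂ)^(r+1) * (-1)^j * ((r+1).choose j : ℂ) * f (t+j)
    = ∑ j ∈ Finset.range (r+1), (-1:ℂ)^r * (-1)^j * (r.choose j : ℂ) * f (t+1+j)
      - ∑ j ∈ Finset.range (r+1), (-1:ℂ)^r * (-1)^j * (r.choose j : ℂ) * f (t+j) := by
  rw [Finset.sum_range_succ' (fun j => (-1:ℂ)^(r+1) * (-1)^j * ((r+1).choose j : ℂ) * f (t+j)) (r+1)]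
  rw [Finset.sum_range_succ' (fun j => (-1:ℂ)^r * (-1)^j * (r.choose j : ℂ) * f (t+j)) r]
  have h1 : ∀ i ∈ Finset.range (r+1),
      (-1:ℂ)^(r+1) * (-1)^(i+1) * ((r+1).choose (i+1) : ℂ) * f (t+(i+1))
      = (-1:ℂ)^r * (-1)^i * (r.choose i : ℂ) * f (t+1+i)
        + (-1:ℂ)^r * (-1)^i * (r.choose (i+1) : ℂ) * f (t+(i+1)) := by
    intro i _
    rw [Nat.choose_succ_succ]
    push_cast
    have : t + (i+1) = t + 1 + i := by omega
    rw [this]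
    ring
  rw [Finset.sum_congr rfl h1, Finset.sum_add_distrib]
  have h2 : ∑ i ∈ Finset.range (r+1), (-1:ℂ)^r * (-1)^i * (r.choose (i+1) : ℂ) * f (t+(i+1))
      = ∑ i ∈ Finset.range r, (-1:ℂ)^r * (-1)^(i+1) * (r.choose (i+1) : ℂ) * f (t+(i+1)) * (-1) := by
    rw [Finset.sum_range_succ]
    simp only [Nat.choose_succ_self, Nat.cast_zero]
    rw [show (-1:ℂ)^r * (-1)^r * 0 * f (t+(r+1)) = 0 by ring, add_zero]
    apply Finset.sum_congr rfl
    intro i _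
    rw [pow_succ]
    ring
  rw [h2]
  simp only [pow_zero, Nat.choose_zero_right, Nat.cast_one, ← Finset.sum_mul]
  ring

lemma descFac_diff_nat (t k : ℕ) :
    (t+1).descFactorial (k+1) = t.descFactorial (k+1) + (k+1) * t.descFactorial k := by
  rw [Nat.succ_descFactorial_succ, Nat.descFactorial_succ]
  by_cases h : k ≤ t
  · have : t + 1 = (t - k) + (k + 1) := by omega
    rw [this, add_mul]
  · rw [Nat.descFactorial_eq_zero_iff_lt.mpr (by omega)]
    simp

lemma D_lemma (m : ℕ) : ∀ (r t : ℕ),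
    ∑ j ∈ Finset.range (r+1), (-1:ℂ)^r * (-1)^j * (r.choose j : ℂ) * ((t+j).descFactorial m : ℂ)
    = (m.descFactorial r : ℂ) * (t.descFactorial (m - r) : ℂ) := by
  intro r
  induction r with
  | zero => intro t; simp
  | succ r ih =>
    intro t
    rw [show r + 1 + 1 = r + 2 from rfl,
      delta_step (fun s => ((s.descFactorial m : ℕ) : ℂ)) r t, ih (t+1), ih t]
    by_cases h : m ≤ r
    · have h0 : m - r = 0 := by omega
      have h1 : (m.descFactorial (r+1) : ℕ) = 0 :=
        Nat.descFactorial_eq_zero_iff_lt.mpr (by omega)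
      rw [h0, h1]
      simp
    · have hk : m - r = (m - (r+1)) + 1 := by omega
      rw [hk, descFac_diff_nat t (m - (r+1)),
        Nat.descFactorial_succ m r]
      push_cast
      have : ((m:ℂ) - r) = ((m - r : ℕ) : ℂ) := by
        rw [Nat.cast_sub (by omega)]
      rw [show ((m - (r+1) : ℕ):ℂ) + 1 = ((m - r : ℕ) : ℂ) by
        rw [Nat.cast_sub (by omega), Nat.cast_sub (by omega)]; push_cast; ring]
      rw [← this]
      ring

/-- The `r`-th forward difference formula (paper's (4.1)): for `k₁ = 1` and
`g(τ) = 𝓕₂⁽¹⁾(a,b₁,b₂;c₁,c₂;τ,t₂,1,k₂,x,y)`,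
`Δ^r g(t₁) = Σ_{j=0}^{r} (−1)^{r−j} C(r,j) g(t₁+j)
  = ((a)_r (b₁)_r x^r / (c₁)_r) 𝓕₂⁽¹⁾(a+r, b₁+r, b₂; c₁+r, c₂; t₁, t₂, 1, k₂, x, y)`. -/
theorem forward_difference_formula (a b₁ b₂ c₁ c₂ x y : ℂ) (k₂ : ℕ) (hk₂ : 0 < k₂)
    (hc₁ : ∀ n : ℕ, c₁ ≠ -(n : ℂ)) (hc₂ : ∀ n : ℕ, c₂ ≠ -(n : ℂ))
    (t₁ t₂ : ℕ)
    (g : ℕ → ℂ) (hg : ∀ τ : ℕ, g τ = F2one a b₁ b₂ c₁ c₂ τ t₂ 1 k₂ x y)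
    (r : ℕ) :
    ∑ j ∈ Finset.range (r + 1), (-1 : ℂ) ^ (r - j) * (r.choose j : ℂ) * g (t₁ + j) =
      poch a r * poch b₁ r * x ^ r / poch c₁ r *
        F2one (a + r) (b₁ + r) b₂ (c₁ + r) c₂ t₁ t₂ 1 k₂ x y := by
  
  -- the τ-independent part of each term
  set q : ℕ → ℕ → ℂ := fun m n =>
    poch a (m + n) * poch b₁ m * poch b₂ n * (-1 : ℂ) ^ (n * k₂) * poch (-(t₂ : ℂ)) (n * k₂)
      * x ^ m * y ^ n
    / (poch c₁ m * poch c₂ n * (Nat.factorial m : ℂ) * (Nat.factorial n : ℂ)) with hq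
  set Q : ℕ → ℂ := fun m => ∑ n ∈ Finset.range (t₂ + 1), q m n with hQ
  -- Step A
  have stepA : ∀ τ : ℕ, τ ≤ t₁ + r →
      F2one a b₁ b₂ c₁ c₂ τ t₂ 1 k₂ x y
      = ∑ m ∈ Finset.range (t₁ + r + 1), (τ.descFactorial m : ℂ) * Q m := by
    intro τ hτ
    have key : ∀ (m : ℕ) (A : ℂ), A * (-1:ℂ)^(m*1) * poch (-(τ:ℂ)) (m*1)
        = A * ((τ.descFactorial m : ℕ):ℂ) := by
      intro m A
      rw [mul_one, descFac_eq, mul_assoc]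
    have hterm : ∀ m, ∑ n ∈ Finset.range (t₂ + 1),
        (poch a (m + n) * poch b₁ m * poch b₂ n * (-1 : ℂ) ^ (m * 1) * poch (-(τ : ℂ)) (m * 1)
          * (-1 : ℂ) ^ (n * k₂) * poch (-(t₂ : ℂ)) (n * k₂) * x ^ m * y ^ n
        / (poch c₁ m * poch c₂ n * (Nat.factorial m : ℂ) * (Nat.factorial n : ℂ)))
        = (τ.descFactorial m : ℂ) * Q m := by
      intro m
      rw [hQ, Finset.mul_sum]
      apply Finset.sum_congr rfl
      intro n _
      rw [key m (poch a (m + n) * poch b₁ m * poch b₂ n), hq]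
      ring
    rw [F2one]
    rw [Finset.sum_congr rfl fun m _ => hterm m]
    apply Finset.sum_subset
    · exact Finset.range_subset_range.mpr (by omega)
    · intro m _ hm
      rw [Finset.mem_range, not_lt] at hm
      rw [Nat.descFactorial_eq_zero_iff_lt.mpr (by omega)]
      simp
  -- Step B : rewrite LHS
  have hsign : ∀ j ∈ Finset.range (r+1), (-1:ℂ)^(r-j) * (r.choose j : ℂ) * g (t₁ + j)
      = (-1:ℂ)^r * (-1)^j * (r.choose j : ℂ) *
        ∑ m ∈ Finset.range (t₁ + r + 1), (((t₁+j).descFactorial m : ℕ) : ℂ) * Q m := by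
    intro j hj
    rw [Finset.mem_range] at hj
    have hjr : j ≤ r := by omega
    have hs : (-1:ℂ)^(r-j) = (-1)^r * (-1)^j := by
      calc (-1:ℂ)^(r-j) = (-1:ℂ)^(r-j) * ((-1)^j*(-1)^j) := by
            rw [← pow_add, ← two_mul, pow_mul]; norm_num
        _ = (-1)^r * (-1)^j := by rw [← mul_assoc, ← pow_add, Nat.sub_add_cancel hjr]
    rw [hs, hg (t₁ + j), stepA (t₁ + j) (by omega)]
  rw [Finset.sum_congr rfl hsign]
  have swap : ∑ j ∈ Finset.range (r+1), (-1:ℂ)^r * (-1)^j * (r.choose j : ℂ) *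
        ∑ m ∈ Finset.range (t₁ + r + 1), (((t₁+j).descFactorial m : ℕ) : ℂ) * Q m
      = ∑ m ∈ Finset.range (t₁ + r + 1),
          (∑ j ∈ Finset.range (r+1), (-1:ℂ)^r * (-1)^j * (r.choose j : ℂ) *
            (((t₁+j).descFactorial m : ℕ) : ℂ)) * Q m := by
    simp_rw [Finset.mul_sum, Finset.sum_mul]
    rw [Finset.sum_comm]
    apply Finset.sum_congr rfl; intro m _
    apply Finset.sum_congr rfl; intro j _
    ring
  rw [swap]
  have hD : ∀ m ∈ Finset.range (t₁ + r + 1),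
      (∑ j ∈ Finset.range (r+1), (-1:ℂ)^r * (-1)^j * (r.choose j : ℂ) *
        (((t₁+j).descFactorial m : ℕ) : ℂ)) * Q m
      = (m.descFactorial r : ℂ) * (t₁.descFactorial (m - r) : ℂ) * Q m := by
    intro m _
    rw [D_lemma m r t₁]
  rw [Finset.sum_congr rfl hD]
  -- Step C : drop m < r, reindex
  have splitC : ∑ m ∈ Finset.range (t₁ + r + 1),
        (m.descFactorial r : ℂ) * (t₁.descFactorial (m - r) : ℂ) * Q m
      = ∑ m' ∈ Finset.range (t₁ + 1),
        (((r+m').descFactorial r : ℕ) : ℂ) * (t₁.descFactorial m' : ℂ) * Q (r+m') := by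
    rw [Finset.range_eq_Ico, ← Finset.sum_Ico_consecutive _ (Nat.zero_le r) (by omega : r ≤ t₁ + r + 1)]
    have h0 : ∑ m ∈ Finset.Ico 0 r,
        (m.descFactorial r : ℂ) * (t₁.descFactorial (m - r) : ℂ) * Q m = 0 := by
      apply Finset.sum_eq_zero
      intro m hm
      rw [Finset.mem_Ico] at hm
      rw [Nat.descFactorial_eq_zero_iff_lt.mpr hm.2]
      simp
    rw [h0, zero_add, Finset.sum_Ico_eq_sum_range,
      show t₁ + r + 1 - r = t₁ + 1 from by omega]
    apply Finset.sum_congr rfl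
    intro m' _
    rw [show r + m' - r = m' from by omega]
  rw [splitC]
  -- Step D : termwise identification with RHS
  rw [F2one, Finset.mul_sum]
  apply Finset.sum_congr rfl
  intro m' _
  rw [hQ, Finset.mul_sum, Finset.mul_sum]
  apply Finset.sum_congr rfl
  intro n _
  rw [hq]
  simp only
  -- rewrites
  have e1 : poch a (r + m' + n) = poch a r * poch (a + (r:ℂ)) (m' + n) := by
    rw [add_assoc, poch_add]
  have e2 : poch b₁ (r + m') = poch b₁ r * poch (b₁ + (r:ℂ)) m' := poch_add b₁ r m'
  have e3 : poch c₁ (r + m') = poch c₁ r * poch (c₁ + (r:ℂ)) m' := poch_add c₁ r m'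
  have e4 : x ^ (r + m') = x ^ r * x ^ m' := pow_add x r m'
  have e5 : ((Nat.factorial (r+m') : ℕ) : ℂ)
      = ((Nat.factorial m' : ℕ) : ℂ) * (((r+m').descFactorial r : ℕ) : ℂ) := by
    rw [← Nat.cast_mul]
    congr 1
    have := Nat.factorial_mul_descFactorial (show r ≤ r + m' by omega)
    simpa [Nat.add_sub_cancel_left] using this.symm
  have e6 : ((t₁.descFactorial m' : ℕ) : ℂ) = (-1:ℂ)^m' * poch (-(t₁:ℂ)) m' := descFac_eq t₁ m'
  rw [e1, e2, e3, e4, e5, e6]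
  have hDF : (((r+m').descFactorial r : ℕ) : ℂ) ≠ 0 := by
    rw [ne_eq, Nat.cast_eq_zero, Nat.descFactorial_eq_zero_iff_lt]
    omega
  have hc1r : poch c₁ r ≠ 0 := poch_ne_zero hc₁ r
  have hc1r' : poch (c₁ + (r:ℂ)) m' ≠ 0 := by
    apply poch_ne_zero
    intro i h
    apply hc₁ (i + r)
    push_cast
    linear_combination h
  have hc2n : poch c₂ n ≠ 0 := poch_ne_zero hc₂ n
  have hfm : ((Nat.factorial m' : ℕ) : ℂ) ≠ 0 := by
    exact_mod_cast Nat.cast_ne_zero.mpr (Nat.factorial_ne_zero m')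
  have hfn : ((Nat.factorial n : ℕ) : ℂ) ≠ 0 := by
    exact_mod_cast Nat.cast_ne_zero.mpr (Nat.factorial_ne_zero n)
  field_simp
  ring
end

section
/- For every r ∈ ℕ, every real x > 0 and every y ∈ ℂ, the r-th derivative at x of the complex-valued function s ↦ s^{b₁+r−1} · 𝓕₂⁽¹⁾(a,b₁,b₂;c₁,c₂;t₁,t₂,k₁,k₂,s,y) on (0,∞) (complex powers of s via the real logarithm) equals x^{b₁−1} (b₁)_r · 𝓕₂⁽¹⁾(a, b₁ + r, b₂; c₁, c₂; t₁, t₂, k₁, k₂, x, y). -/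
open Complex Finset

lemma poch_mul_poch (z : ℂ) (n m : ℕ) :
    poch z n * poch (z + n) m = poch z (n + m) := by
  have h := congrArg (Polynomial.eval z) (ascPochhammer_mul (S := ℂ) n m)
  simpa [poch, Polynomial.eval_comp] using h

lemma poch_eq_prod (z : ℂ) (n : ℕ) :
    poch z n = ∏ j ∈ Finset.range n, (z + j) := by
  induction n with
  | zero => simp [poch]
  | succ n ih =>
    rw [poch, ascPochhammer_succ_eval, ← poch, ih, Finset.prod_range_succ]

lemma iteratedDeriv_sum_cpow {ι : Type*} (A : Finset ι) (r : ℕ) :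
    ∀ (D w : ι → ℂ) (x : ℝ), 0 < x →
      iteratedDeriv r (fun t : ℝ => ∑ i ∈ A, D i * (t : ℂ) ^ w i) x
        = ∑ i ∈ A, D i * (∏ j ∈ Finset.range r, (w i - j)) * (x : ℂ) ^ (w i - r) := by
  induction r with
  | zero => intro D w x hx; simp
  | succ n ih =>
    intro D w x hx
    rw [iteratedDeriv_succ']
    have hev : deriv (fun t : ℝ => ∑ i ∈ A, D i * (t : ℂ) ^ w i)
        =ᶠ[nhds x] fun t : ℝ => ∑ i ∈ A, (D i * w i) * (t : ℂ) ^ (w i - 1) := by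
      filter_upwards [eventually_gt_nhds hx] with s hs
      have hd : ∀ i ∈ A, HasDerivAt (fun t : ℝ => D i * (t : ℂ) ^ w i)
          (D i * (w i * (s : ℂ) ^ (w i - 1))) s := fun i _ =>
        ((Complex.hasStrictDerivAt_cpow_const
          (Complex.ofReal_mem_slitPlane.2 hs)).hasDerivAt.comp_ofReal).const_mul (D i)
      rw [(HasDerivAt.fun_sum hd).deriv]
      exact Finset.sum_congr rfl fun i _ => by ring
    rw [hev.iteratedDeriv_eq n, ih (fun i => D i * w i) (fun i => w i - 1) x hx]
    refine Finset.sum_congr rfl fun i _ => ?_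
    have h0 : w i - 1 - (n : ℂ) = w i - ((n + 1 : ℕ) : ℂ) := by push_cast; ring
    have h1 : ∏ j ∈ Finset.range (n + 1), (w i - j)
        = w i * ∏ j ∈ Finset.range n, (w i - 1 - j) := by
      rw [Finset.prod_range_succ']
      simp only [Nat.cast_zero, sub_zero, mul_comm]
      congr 1
      exact Finset.prod_congr rfl fun j _ => by push_cast; ring
    rw [h0, h1]; ring

lemma prod_descending (z : ℂ) (m r : ℕ) :
    ∏ j ∈ Finset.range r, (z + r - 1 + m - j) = poch (z + m) r := by
  rw [poch_eq_prod]
  rw [← Finset.prod_range_reflect (fun j => z + (m : ℂ) + j) r]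
  refine Finset.prod_congr rfl fun j hj => ?_
  have hj' : 1 + j ≤ r := by have := Finset.mem_range.1 hj; omega
  rw [Nat.sub_sub, Nat.cast_sub hj']
  push_cast; ring

/-- The differential formula
`(∂/∂x)^r [x^{b₁+r−1} 𝓕₂⁽¹⁾(a,b₁,b₂;c₁,c₂;t₁,t₂,k₁,k₂,x,y)]
  = x^{b₁−1} (b₁)_r 𝓕₂⁽¹⁾(a, b₁+r, b₂; c₁, c₂; t₁, t₂, k₁, k₂, x, y)` at real `x > 0`,
complex powers of the positive real variable taken via the real logarithm. -/
theorem deriv_pow_b1_formula (a b₁ b₂ c₁ c₂ : ℂ) (k₁ k₂ : ℕ)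
    (hk₁ : 0 < k₁) (hk₂ : 0 < k₂)
    (hc₁ : ∀ n : ℕ, c₁ ≠ -(n : ℂ)) (hc₂ : ∀ n : ℕ, c₂ ≠ -(n : ℂ))
    (t₁ t₂ : ℕ) (r : ℕ) (x : ℝ) (hx : 0 < x) (y : ℂ) :
    iteratedDeriv r
        (fun s : ℝ => (s : ℂ) ^ (b₁ + (r : ℂ) - 1) * F2one a b₁ b₂ c₁ c₂ t₁ t₂ k₁ k₂ (s : ℂ) y)
        x =
      (x : ℂ) ^ (b₁ - 1) * poch b₁ r * F2one a (b₁ + r) b₂ c₁ c₂ t₁ t₂ k₁ k₂ (x : ℂ) y := by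
  set A : Finset (ℕ × ℕ) := Finset.range (t₁ + 1) ×ˢ Finset.range (t₂ + 1) with hA
  set D : ℕ × ℕ → ℂ := fun p =>
    (poch a (p.1 + p.2) * poch b₁ p.1 * poch b₂ p.2 * (-1 : ℂ) ^ (p.1 * k₁)
        * poch (-(t₁ : ℂ)) (p.1 * k₁) * (-1 : ℂ) ^ (p.2 * k₂) * poch (-(t₂ : ℂ)) (p.2 * k₂)
        * y ^ p.2)
      / (poch c₁ p.1 * poch c₂ p.2 * (Nat.factorial p.1 : ℂ) * (Nat.factorial p.2 : ℂ))
    with hD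
  set w : ℕ × ℕ → ℂ := fun p => b₁ + (r : ℂ) - 1 + p.1 with hw
  have hx0 : (x : ℂ) ≠ 0 := Complex.ofReal_ne_zero.2 (ne_of_gt hx)
  have hev : (fun s : ℝ => (s : ℂ) ^ (b₁ + (r : ℂ) - 1) * F2one a b₁ b₂ c₁ c₂ t₁ t₂ k₁ k₂ s y)
      =ᶠ[nhds x] fun s : ℝ => ∑ p ∈ A, D p * (s : ℂ) ^ w p := by
    filter_upwards [eventually_gt_nhds hx] with s hs
    have hs0 : (s : ℂ) ≠ 0 := Complex.ofReal_ne_zero.2 (ne_of_gt hs)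
    rw [F2one, Finset.mul_sum, hA, Finset.sum_product]
    refine Finset.sum_congr rfl fun m _ => ?_
    rw [Finset.mul_sum]
    refine Finset.sum_congr rfl fun n _ => ?_
    simp only [hD, hw]
    rw [cpow_add _ _ hs0, cpow_natCast]
    ring
  rw [hev.iteratedDeriv_eq r, iteratedDeriv_sum_cpow A r D w x hx, F2one, Finset.mul_sum, hA,
    Finset.sum_product]
  refine Finset.sum_congr rfl fun m hm => ?_
  rw [Finset.mul_sum]
  refine Finset.sum_congr rfl fun n hn => ?_
  simp only [hD, hw]
  have hprod : ∏ j ∈ Finset.range r, (b₁ + (r : ℂ) - 1 + (m : ℂ) - j) = poch (b₁ + m) r :=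
    prod_descending b₁ m r
  have hpoch : poch b₁ m * poch (b₁ + m) r = poch b₁ r * poch (b₁ + r) m := by
    rw [poch_mul_poch, poch_mul_poch, add_comm]
  have hexp : b₁ + (r : ℂ) - 1 + (m : ℂ) - (r : ℂ) = (b₁ - 1) + ((m : ℕ) : ℂ) := by ring
  rw [hprod, hexp, cpow_add _ _ hx0, cpow_natCast]
  have h1 : poch c₁ m ≠ 0 := by
    rw [poch_eq_prod]
    exact Finset.prod_ne_zero_iff.2 fun j _ hj =>
      hc₁ j (eq_neg_of_add_eq_zero_left hj)
  have h2 : poch c₂ n ≠ 0 := by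
    rw [poch_eq_prod]
    exact Finset.prod_ne_zero_iff.2 fun j _ hj =>
      hc₂ j (eq_neg_of_add_eq_zero_left hj)
  have h3 : (Nat.factorial m : ℂ) ≠ 0 := Nat.cast_ne_zero.2 m.factorial_ne_zero
  have h4 : (Nat.factorial n : ℂ) ≠ 0 := Nat.cast_ne_zero.2 n.factorial_ne_zero
  field_simp
  linear_combination (poch a (m + n) * poch b₂ n
      * poch (-(t₁ : ℂ)) (m * k₁) * poch (-(t₂ : ℂ)) (n * k₂)
      * y ^ n * (x : ℂ) ^ (b₁ - 1)) * hpoch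
end
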